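/- Let a1 > 1, a2 > 1, d > 0, k > 0, θ ∈ ℝ, and let α > 0, β > 0 be arbitrary constants. Suppose (u, v) is a pair of nonnegative C² functions on ℝ satisfying the differential inequalities u'' + θ u' + u(1 − u − a1 v) ≥ 0 and d v'' + θ v' + k v(1 − a2 u − v) ≥ 0 on ℝ, with (u, v)(x) → (1, 0) as x → −∞ and (u, v)(x) → (0, 1) as x → +∞. Then q(x) = α u(x) + d β v(x) satisfies q(x) ≤ max[α/d, β] · max[1, d²] for every x ∈ ℝ. -/

import Mathlib

set_option maxHeartbeats 8000000

open Filter Real Set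



lemma cd2_diff {f : ℝ → ℝ} (hf : ContDiff ℝ 2 f) : Differentiable ℝ f :=
  hf.differentiable (by norm_num)

lemma cd2_diff_deriv {f : ℝ → ℝ} (hf : ContDiff ℝ 2 f) : Differentiable ℝ (deriv f) := by
  have h2 : ContDiff ℝ ((1 : ℕ) + 1) f := by exact_mod_cast hf
  rw [contDiff_succ_iff_deriv] at h2
  exact h2.2.2.differentiable (by norm_num)

lemma deriv_comp_neg' (F : ℝ → ℝ) (hF : Differentiable ℝ F) (x : ℝ) :
    deriv (fun y => F (-y)) x = -deriv F (-x) := by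
  have h := HasDerivAt.comp x ((hF (-x)).hasDerivAt) (hasDerivAt_neg' x)
  have h2 : HasDerivAt (fun y => F (-y)) (deriv F (-x) * (-1)) x := h
  rw [h2.deriv]; ring

lemma deriv2_comp_neg (F : ℝ → ℝ) (hF : ContDiff ℝ 2 F) (x : ℝ) :
    deriv (deriv (fun y => F (-y))) x = deriv (deriv F) (-x) := by
  have h1 : deriv (fun y => F (-y)) = fun y => -(deriv F (-y)) :=
    funext fun y => deriv_comp_neg' F (cd2_diff hF) y
  rw [h1]
  have h2 : deriv (fun y => deriv F (-y)) x = -(deriv (deriv F) (-x)) :=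
    deriv_comp_neg' (deriv F) (cd2_diff_deriv hF) x
  rw [deriv.fun_neg, h2]; ring

lemma exists_global_max {f : ℝ → ℝ} (hf : Continuous f) {L1 L2 : ℝ}
    (h1 : Tendsto f atBot (nhds L1)) (h2 : Tendsto f atTop (nhds L2))
    {y : ℝ} (hy1 : L1 < f y) (hy2 : L2 < f y) : ∃ z, ∀ x, f x ≤ f z := by
  obtain ⟨A, hA⟩ := eventually_atBot.mp (h1.eventually_lt_const hy1)
  obtain ⟨B, hB⟩ := eventually_atTop.mp (h2.eventually_lt_const hy2)
  set A' := min A y with hA'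
  set B' := max B y with hB'
  have hyI : y ∈ Icc A' B' := ⟨min_le_right _ _, le_max_right _ _⟩
  obtain ⟨z, hz, hmax⟩ := (isCompact_Icc (a := A') (b := B')).exists_isMaxOn ⟨y, hyI⟩
    hf.continuousOn
  refine ⟨z, fun x => ?_⟩
  rcases le_or_gt A' x with hx1 | hx1
  · rcases le_or_gt x B' with hx2 | hx2
    · exact hmax ⟨hx1, hx2⟩
    · have : f x < f y := hB x (le_of_lt (lt_of_le_of_lt (le_max_left _ _) hx2))
      exact le_trans this.le (hmax hyI)
  · have : f x < f y := hA x (le_of_lt (lt_of_lt_of_le hx1 (min_le_left _ _)))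
    exact le_trans this.le (hmax hyI)

lemma deriv2_nonpos_at_max {f : ℝ → ℝ} (hf : ContDiff ℝ 2 f) {z : ℝ}
    (hz : ∀ x, f x ≤ f z) : deriv (deriv f) z ≤ 0 := by
  by_contra hpos
  push_neg at hpos
  have hg : deriv f z = 0 :=
    (IsLocalMax.deriv_eq_zero (Filter.Eventually.of_forall fun x => hz x))
  have hder : HasDerivAt (deriv f) (deriv (deriv f) z) z :=
    ((cd2_diff_deriv hf) z).hasDerivAt
  have hslope := hasDerivAt_iff_tendsto_slope.mp hder
  have hev : ∀ᶠ x in nhdsWithin z {z}ᶜ, 0 < slope (deriv f) z x :=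
    hslope.eventually (eventually_gt_nhds hpos)
  have hev2 : ∀ᶠ x in nhdsWithin z (Ioi z), 0 < slope (deriv f) z x :=
    hev.filter_mono (nhdsWithin_mono z fun x hx => ne_of_gt hx)
  rw [eventually_nhdsWithin_iff] at hev2
  obtain ⟨ε, hε, hball⟩ := Metric.eventually_nhds_iff.mp hev2
  set b := z + ε / 2 with hb
  have hzb : z < b := by simp [hb]; linarith
  have hgpos : ∀ x ∈ Ioo z b, 0 < deriv f x := by
    intro x hx
    have hd : dist x z < ε := by
      rw [Real.dist_eq, abs_of_pos (by linarith [hx.1])]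
      have := hx.2; simp [hb] at this; linarith
    have := hball hd hx.1
    rw [slope_def_field, hg, sub_zero] at this
    have hxz : 0 < x - z := by linarith [hx.1]
    have := mul_pos this hxz
    rwa [div_mul_cancel₀] at this
    exact ne_of_gt hxz
  have hmono : StrictMonoOn f (Icc z b) := by
    apply strictMonoOn_of_deriv_pos (convex_Icc z b) ((cd2_diff hf).continuous.continuousOn)
    intro x hx
    rw [interior_Icc] at hx
    exact hgpos x hx
  have : f z < f b := hmono ⟨le_refl z, hzb.le⟩ ⟨hzb.le, le_refl b⟩ hzb
  exact absurd (hz b) (not_le.mpr this)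




lemma oneSided (D Θ c A1 A2 K1 K2 : ℝ) (hD : 1 < D) (hΘ : 0 < Θ) (hc : 0 < c)
    (hA1 : 1 ≤ A1) (hA2 : 1 ≤ A2) (hK1 : 0 ≤ K1) (hK2 : 0 ≤ K2)
    (U V : ℝ → ℝ) (hU : ContDiff ℝ 2 U) (hV : ContDiff ℝ 2 V)
    (hU0 : ∀ x, 0 ≤ U x) (hV0 : ∀ x, 0 ≤ V x)
    (hU1 : ∀ x, U x ≤ 1) (hV1 : ∀ x, V x ≤ 1)
    (hE1 : ∀ x, 0 ≤ deriv (deriv U) x + Θ * deriv U x + K1 * (U x * (1 - U x - A1 * V x)))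
    (hE2 : ∀ x, 0 ≤ D * deriv (deriv V) x + Θ * deriv V x + K2 * (V x * (1 - A2 * U x - V x)))
    (hlim : Tendsto U atTop (nhds 0) ∨ Tendsto V atTop (nhds 0))
    (x₀ : ℝ) (hq : max 1 c * D < U x₀ + c * V x₀)
    (hp : 0 < deriv U x₀) (hrel : deriv U x₀ + c * deriv V x₀ = 0) : False := by
  have hD0 : (0:ℝ) < D := by linarith
  set u₀ := U x₀ with hu₀def
  set v₀ := V x₀ with hv₀def
  set p := deriv U x₀ with hpdef
  have h1D : (1:ℝ) * D ≤ max 1 c * D :=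
    mul_le_mul_of_nonneg_right (le_max_left 1 c) hD0.le
  have hcD : c * D ≤ max 1 c * D :=
    mul_le_mul_of_nonneg_right (le_max_right 1 c) hD0.le
  have hmax1 : (1:ℝ) ≤ max 1 c := le_max_left 1 c
  have hmaxc : c ≤ max 1 c := le_max_right 1 c
  have hu₀pos : 0 < u₀ := by
    rcases lt_or_ge 0 u₀ with h | h
    · exact h
    · exfalso
      nlinarith [hV1 x₀, hU0 x₀, hV0 x₀]
  have hv₀pos : 0 < v₀ := by
    rcases lt_or_ge 0 v₀ with h | h
    · exact h
    · exfalso; nlinarith [hU1 x₀, hV0 x₀]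
  have hsum : 1 < u₀ + v₀ := by
    rcases le_or_gt c 1 with h | h
    · nlinarith [hV0 x₀]
    · nlinarith [hU0 x₀]
  have hVd : deriv V x₀ = -(p/c) := by field_simp; linarith
  -- weighted derivative functions
  set m1 : ℝ → ℝ := fun x => Real.exp (Θ*x) * deriv U x with hm1def
  set m2 : ℝ → ℝ := fun x => Real.exp ((Θ/D)*x) * deriv V x with hm2def
  have hdm1 : ∀ x, HasDerivAt m1
      (Real.exp (Θ*x) * Θ * deriv U x + Real.exp (Θ*x) * deriv (deriv U) x) x := by
    intro x
    have h1 : HasDerivAt (fun y : ℝ => Θ * y) Θ x := by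
      simpa using (hasDerivAt_id x).const_mul Θ
    exact (h1.exp).mul ((cd2_diff_deriv hU x).hasDerivAt)
  have hdm2 : ∀ x, HasDerivAt m2
      (Real.exp ((Θ/D)*x) * (Θ/D) * deriv V x + Real.exp ((Θ/D)*x) * deriv (deriv V) x) x := by
    intro x
    have h1 : HasDerivAt (fun y : ℝ => (Θ/D) * y) (Θ/D) x := by
      simpa using (hasDerivAt_id x).const_mul (Θ/D)
    exact (h1.exp).mul ((cd2_diff_deriv hV x).hasDerivAt)
  have hm1mono : ∀ s : Set ℝ, Convex ℝ s → (∀ x ∈ interior s, 1 ≤ U x + A1 * V x) →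
      MonotoneOn m1 s := by
    intro s hconv hzone
    apply monotoneOn_of_deriv_nonneg hconv
    · exact ((Real.continuous_exp.comp (continuous_const.mul continuous_id)).mul
        (cd2_diff_deriv hU).continuous).continuousOn
    · intro x hx
      exact ((Real.differentiable_exp.comp (differentiable_id.const_mul Θ)).mul
        (cd2_diff_deriv hU)).differentiableAt.differentiableWithinAt
    · intro x hx
      rw [(hdm1 x).deriv]
      have h1 := hE1 x
      have hz := hzone x hx
      have hr : K1 * (U x * (1 - U x - A1 * V x)) ≤ 0 := by
        apply mul_nonpos_of_nonneg_of_nonpos hK1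
        apply mul_nonpos_of_nonneg_of_nonpos (hU0 x)
        linarith
      have h2 : 0 ≤ deriv (deriv U) x + Θ * deriv U x := by linarith
      nlinarith [mul_nonneg (Real.exp_nonneg (Θ*x)) h2]
  have hm2mono : ∀ s : Set ℝ, Convex ℝ s → (∀ x ∈ interior s, 1 ≤ A2 * U x + V x) →
      MonotoneOn m2 s := by
    intro s hconv hzone
    apply monotoneOn_of_deriv_nonneg hconv
    · exact ((Real.continuous_exp.comp (continuous_const.mul continuous_id)).mul
        (cd2_diff_deriv hV).continuous).continuousOn
    · intro x hx
      exact ((Real.differentiable_exp.comp (differentiable_id.const_mul (Θ/D))).mul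
        (cd2_diff_deriv hV)).differentiableAt.differentiableWithinAt
    · intro x hx
      rw [(hdm2 x).deriv]
      have h2 := hE2 x
      have hz := hzone x hx
      have hr : K2 * (V x * (1 - A2 * U x - V x)) ≤ 0 := by
        apply mul_nonpos_of_nonneg_of_nonpos hK2
        apply mul_nonpos_of_nonneg_of_nonpos (hV0 x)
        linarith
      have h3 : 0 ≤ D * deriv (deriv V) x + Θ * deriv V x := by linarith
      have h4 : 0 ≤ Real.exp ((Θ/D)*x) * (D * deriv (deriv V) x + Θ * deriv V x) :=
        mul_nonneg (Real.exp_nonneg _) h3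
      have h5 : Real.exp ((Θ/D)*x) * (Θ/D) * deriv V x + Real.exp ((Θ/D)*x) * deriv (deriv V) x
          = (Real.exp ((Θ/D)*x) * (D * deriv (deriv V) x + Θ * deriv V x)) / D := by
        field_simp; ring
      rw [h5]
      positivity
  -- comparison functions
  set F1 : ℝ → ℝ := fun x => U x - (p/Θ) * (1 - Real.exp (-(Θ*(x - x₀)))) with hF1def
  set F2 : ℝ → ℝ := fun x => V x + (p*D/(c*Θ)) * (1 - Real.exp (-((Θ/D)*(x - x₀)))) with hF2def
  have hdF1 : ∀ x, HasDerivAt F1 (deriv U x - p * Real.exp (-(Θ*(x - x₀)))) x := by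
    intro x
    have h1 : HasDerivAt (fun y : ℝ => -(Θ*(y - x₀))) (-Θ) x := by
      simpa using (((hasDerivAt_id x).sub_const x₀).const_mul Θ).fun_neg
    have h3 : HasDerivAt (fun y => (p/Θ) * (1 - Real.exp (-(Θ*(y - x₀)))))
        ((p/Θ) * (0 - Real.exp (-(Θ*(x - x₀))) * (-Θ))) x :=
      ((hasDerivAt_const x (1:ℝ)).sub h1.exp).const_mul _
    have h4 := ((cd2_diff hU x).hasDerivAt).fun_sub h3
    refine h4.congr_deriv ?_
    field_simp
    ring
  have hdF2 : ∀ x, HasDerivAt F2 (deriv V x + (p/c) * Real.exp (-((Θ/D)*(x - x₀)))) x := by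
    intro x
    have h1 : HasDerivAt (fun y : ℝ => -((Θ/D)*(y - x₀))) (-(Θ/D)) x := by
      simpa using (((hasDerivAt_id x).sub_const x₀).const_mul (Θ/D)).fun_neg
    have h3 : HasDerivAt (fun y => (p*D/(c*Θ)) * (1 - Real.exp (-((Θ/D)*(y - x₀)))))
        ((p*D/(c*Θ)) * (0 - Real.exp (-((Θ/D)*(x - x₀))) * (-(Θ/D)))) x :=
      ((hasDerivAt_const x (1:ℝ)).sub h1.exp).const_mul _
    have h4 := ((cd2_diff hV x).hasDerivAt).fun_add h3
    refine h4.congr_deriv ?_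
    field_simp
    ring
  have hF1mono : ∀ s : Set ℝ, Convex ℝ s → x₀ ∈ s → (∀ x ∈ s, x₀ ≤ x) →
      (∀ x ∈ interior s, 1 ≤ U x + A1 * V x) → MonotoneOn F1 s := by
    intro s hconv hx₀s hle hzone
    have hm1 := hm1mono s hconv hzone
    apply monotoneOn_of_deriv_nonneg hconv
    · apply ContinuousOn.sub (cd2_diff hU).continuous.continuousOn
      apply ContinuousOn.mul continuousOn_const
      apply ContinuousOn.sub continuousOn_const
      exact (Real.continuous_exp.comp
        ((continuous_const.mul (continuous_id.sub continuous_const)).neg)).continuousOn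
    · intro x hx
      exact (hdF1 x).differentiableAt.differentiableWithinAt
    · intro x hx
      rw [(hdF1 x).deriv]
      have hxs := interior_subset hx
      have hkey : Real.exp (Θ*x₀) * p ≤ Real.exp (Θ*x) * deriv U x :=
        hm1 hx₀s hxs (hle x hxs)
      have hepos : (0:ℝ) < Real.exp (Θ*x) := Real.exp_pos _
      have hrw : Real.exp (-(Θ*(x - x₀))) = Real.exp (Θ*x₀) / Real.exp (Θ*x) := by
        rw [← Real.exp_sub]; ring_nf
      rw [sub_nonneg, hrw]
      rw [mul_div_assoc', div_le_iff₀ hepos]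
      nlinarith [hkey]
  have hF2mono : ∀ s : Set ℝ, Convex ℝ s → x₀ ∈ s → (∀ x ∈ s, x₀ ≤ x) →
      (∀ x ∈ interior s, 1 ≤ A2 * U x + V x) → MonotoneOn F2 s := by
    intro s hconv hx₀s hle hzone
    have hm2 := hm2mono s hconv hzone
    apply monotoneOn_of_deriv_nonneg hconv
    · apply ContinuousOn.add (cd2_diff hV).continuous.continuousOn
      apply ContinuousOn.mul continuousOn_const
      apply ContinuousOn.sub continuousOn_const
      exact (Real.continuous_exp.comp
        ((continuous_const.mul (continuous_id.sub continuous_const)).neg)).continuousOn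
    · intro x hx
      exact (hdF2 x).differentiableAt.differentiableWithinAt
    · intro x hx
      rw [(hdF2 x).deriv]
      have hxs := interior_subset hx
      have hkey : Real.exp ((Θ/D)*x₀) * deriv V x₀ ≤ Real.exp ((Θ/D)*x) * deriv V x :=
        hm2 hx₀s hxs (hle x hxs)
      have hepos : (0:ℝ) < Real.exp ((Θ/D)*x) := Real.exp_pos _
      have hrw : Real.exp (-((Θ/D)*(x - x₀))) = Real.exp ((Θ/D)*x₀) / Real.exp ((Θ/D)*x) := by
        rw [← Real.exp_sub]; ring_nf
      rw [hVd] at hkey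
      rw [← neg_le_iff_add_nonneg, hrw]
      rw [← neg_mul, mul_div_assoc', div_le_iff₀ hepos]
      nlinarith [hkey]
  -- the exit set
  set T : Set ℝ := Ici x₀ ∩ ({x | U x + A1 * V x ≤ 1} ∪ {x | A2 * U x + V x ≤ 1}) with hTdef
  have hUc : Continuous U := (cd2_diff hU).continuous
  have hVc : Continuous V := (cd2_diff hV).continuous
  have hTclosed : IsClosed T := by
    apply IsClosed.inter isClosed_Ici
    apply IsClosed.union
    · exact isClosed_le (hUc.add (continuous_const.mul hVc)) continuous_const
    · exact isClosed_le ((continuous_const.mul hUc).add hVc) continuous_const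
  have hzone₀1 : 1 < U x₀ + A1 * V x₀ := by nlinarith [hV0 x₀]
  have hzone₀2 : 1 < A2 * U x₀ + V x₀ := by nlinarith [hU0 x₀]
  have hx₀T : x₀ ∉ T := by
    intro hmem
    rcases hmem.2 with h | h
    · simp only [mem_setOf_eq] at h; linarith
    · simp only [mem_setOf_eq] at h; linarith
  have hmemT : ∀ x, x₀ ≤ x → ¬(1 < U x + A1 * V x ∧ 1 < A2 * U x + V x) → x ∈ T := by
    intro x hx hcon
    refine ⟨hx, ?_⟩
    rcases le_or_gt (U x + A1 * V x) 1 with h | h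
    · exact Or.inl h
    rcases le_or_gt (A2 * U x + V x) 1 with h2 | h2
    · exact Or.inr h2
    exact absurd ⟨h, h2⟩ hcon
  by_cases hTne : T.Nonempty
  · -- case (ii): finite exit point
    set x₁ := sInf T with hx₁def
    have hbdd : BddBelow T := ⟨x₀, fun t ht => ht.1⟩
    have hx₁T : x₁ ∈ T := hTclosed.csInf_mem hTne hbdd
    have hx₀le : x₀ ≤ x₁ := le_csInf hTne (fun t ht => ht.1)
    have hx₀lt : x₀ < x₁ := lt_of_le_of_ne hx₀le (fun h => hx₀T (h ▸ hx₁T))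
    have hIco : ∀ x, x₀ ≤ x → x < x₁ → (1 < U x + A1 * V x ∧ 1 < A2 * U x + V x) := by
      intro x hx hxlt
      by_contra hcon
      exact absurd (csInf_le hbdd (hmemT x hx hcon)) (not_le.mpr hxlt)
    have hzI1 : ∀ x ∈ interior (Icc x₀ x₁), 1 ≤ U x + A1 * V x := by
      intro x hx; rw [interior_Icc] at hx; exact (hIco x hx.1.le hx.2).1.le
    have hzI2 : ∀ x ∈ interior (Icc x₀ x₁), 1 ≤ A2 * U x + V x := by
      intro x hx; rw [interior_Icc] at hx; exact (hIco x hx.1.le hx.2).2.le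
    have hF1m := hF1mono (Icc x₀ x₁) (convex_Icc _ _) (left_mem_Icc.mpr hx₀le)
      (fun x hx => hx.1) hzI1
    have hF2m := hF2mono (Icc x₀ x₁) (convex_Icc _ _) (left_mem_Icc.mpr hx₀le)
      (fun x hx => hx.1) hzI2
    have hsum₁ : U x₁ + V x₁ ≤ 1 := by
      rcases hx₁T.2 with h | h
      · simp only [mem_setOf_eq] at h; nlinarith [hV0 x₁]
      · simp only [mem_setOf_eq] at h; nlinarith [hU0 x₁]
    set E : ℝ := Real.exp (-(Θ*(x₁ - x₀))) with hEdef
    set E' : ℝ := Real.exp (-((Θ/D)*(x₁ - x₀))) with hE'def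
    have hGb : u₀ ≤ U x₁ - (p/Θ) * (1 - E) := by
      have h := hF1m (left_mem_Icc.mpr hx₀le) (right_mem_Icc.mpr hx₀le) hx₀le
      simp only [hF1def] at h
      simp only [sub_self, mul_zero, neg_zero, Real.exp_zero] at h
      simpa using h
    have hZb : v₀ - (p*D/(c*Θ)) * (1 - E') ≤ V x₁ := by
      have h := hF2m (left_mem_Icc.mpr hx₀le) (right_mem_Icc.mpr hx₀le) hx₀le
      simp only [hF2def] at h
      simp only [sub_self, mul_zero, neg_zero, Real.exp_zero] at h
      simpa using h
    have hΘD : Θ/D ≤ Θ := div_le_self hΘ.le (by linarith)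
    have hΘDpos : 0 < Θ/D := by positivity
    have hEE' : E ≤ E' := by
      rw [hEdef, hE'def, Real.exp_le_exp]
      nlinarith [hx₀lt]
    have hElt : E < 1 := by
      rw [hEdef, Real.exp_lt_one_iff]
      nlinarith [hx₀lt]
    have hE'lt : E' < 1 := by
      rw [hE'def, Real.exp_lt_one_iff]
      nlinarith [hx₀lt]
    have hYpos : 0 < (p/Θ) * (1 - E) := by
      apply mul_pos (by positivity); linarith
    have hZY : c * ((p*D/(c*Θ)) * (1 - E')) ≤ D * ((p/Θ) * (1 - E)) := by
      have h1 : c * ((p*D/(c*Θ)) * (1 - E')) = D * ((p/Θ) * (1 - E')) := by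
        field_simp
      rw [h1]
      apply mul_le_mul_of_nonneg_left _ hD0.le
      apply mul_le_mul_of_nonneg_left (by linarith) (by positivity)
    -- the chain
    have hUx₁ : U x₁ ≤ 1 := hU1 x₁
    have hchain : c * (u₀ + v₀ - 1 + (U x₁ - u₀)) ≤ D * (U x₁ - u₀) := by
      have h2 : v₀ - (p*D/(c*Θ)) * (1 - E') ≤ 1 - U x₁ := by
        linarith [hV0 x₁]
      have h3 : u₀ + v₀ - 1 + (U x₁ - u₀) ≤ (p*D/(c*Θ)) * (1 - E') := by linarith
      have h4 : c * (u₀ + v₀ - 1 + (U x₁ - u₀)) ≤ c * ((p*D/(c*Θ)) * (1 - E')) :=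
        mul_le_mul_of_nonneg_left h3 hc.le
      have h5 : D * ((p/Θ) * (1 - E)) ≤ D * (U x₁ - u₀) := by
        apply mul_le_mul_of_nonneg_left _ hD0.le
        linarith
      linarith
    have hGpos : 0 < U x₁ - u₀ := by linarith
    have hGle : U x₁ - u₀ ≤ 1 - u₀ := by linarith
    rcases le_or_gt D c with hDc | hDc
    · nlinarith [mul_pos (sub_pos.mpr hsum) hc]
    · have h6 : c * (u₀ + v₀ - 1) ≤ (D - c) * (U x₁ - u₀) := by nlinarith
      have h7 : (D - c) * (U x₁ - u₀) ≤ (D - c) * (1 - u₀) :=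
        mul_le_mul_of_nonneg_left hGle (by linarith)
      nlinarith [mul_pos hu₀pos (sub_pos.mpr hD)]
  · -- case (i): zones active on all of [x₀, ∞)
    have hzoneAll : ∀ x, x₀ ≤ x → (1 < U x + A1 * V x ∧ 1 < A2 * U x + V x) := by
      intro x hx
      by_contra hcon
      exact hTne ⟨x, hmemT x hx hcon⟩
    have hzI1 : ∀ x ∈ interior (Ici x₀), 1 ≤ U x + A1 * V x := by
      intro x hx; rw [interior_Ici] at hx; exact (hzoneAll x hx.le).1.le
    have hzI2 : ∀ x ∈ interior (Ici x₀), 1 ≤ A2 * U x + V x := by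
      intro x hx; rw [interior_Ici] at hx; exact (hzoneAll x hx.le).2.le
    have hF1m := hF1mono (Ici x₀) (convex_Ici x₀) self_mem_Ici (fun x hx => hx) hzI1
    have hF2m := hF2mono (Ici x₀) (convex_Ici x₀) self_mem_Ici (fun x hx => hx) hzI2
    have hB1 : ∀ x, x₀ ≤ x → (p/Θ) * (1 - Real.exp (-(Θ*(x - x₀)))) ≤ U x - u₀ := by
      intro x hx
      have h := hF1m self_mem_Ici hx hx
      simp only [hF1def] at h
      simp only [sub_self, mul_zero, neg_zero, Real.exp_zero] at h
      rw [hu₀def]; linarith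
    have hB2 : ∀ x, x₀ ≤ x → v₀ - (p*D/(c*Θ)) * (1 - Real.exp (-((Θ/D)*(x - x₀)))) ≤ V x := by
      intro x hx
      have h := hF2m self_mem_Ici hx hx
      simp only [hF2def] at h
      simp only [sub_self, mul_zero, neg_zero, Real.exp_zero] at h
      rw [hv₀def]; linarith
    have haux : Tendsto (fun x : ℝ => Θ*(x - x₀)) atTop atTop := by
      apply Tendsto.const_mul_atTop hΘ
      simpa [sub_eq_add_neg] using tendsto_atTop_add_const_right atTop (-x₀) tendsto_id
    have htends : Tendsto (fun x => Real.exp (-(Θ*(x - x₀)))) atTop (nhds 0) :=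
      Real.tendsto_exp_neg_atTop_nhds_zero.comp haux
    rcases hlim with hUtop | hVtop
    · -- U tends to 0 at +∞, but U x ≥ u₀ > 0
      have hkey : ∀ x, x₀ ≤ x → u₀ ≤ U x := by
        intro x hx
        have h := hB1 x hx
        have hge0 : 0 ≤ (p/Θ) * (1 - Real.exp (-(Θ*(x - x₀)))) := by
          apply mul_nonneg (by positivity)
          have : Real.exp (-(Θ*(x - x₀))) ≤ 1 := by
            rw [Real.exp_le_one_iff]; nlinarith
          linarith
        linarith
      have := ge_of_tendsto hUtop (eventually_atTop.mpr ⟨x₀, hkey⟩)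
      linarith
    · -- V tends to 0 at +∞
      have hPle : p/Θ ≤ 1 - u₀ := by
        have hL : Tendsto (fun x => (p/Θ) * (1 - Real.exp (-(Θ*(x - x₀))))) atTop
            (nhds ((p/Θ) * (1 - 0))) := (tendsto_const_nhds.sub htends).const_mul _
        rw [sub_zero, mul_one] at hL
        apply le_of_tendsto hL
        apply eventually_atTop.mpr
        exact ⟨x₀, fun x hx => by linarith [hB1 x hx, hU1 x]⟩
      have hvle : v₀ ≤ p*D/(c*Θ) := by
        have hcoef : (0:ℝ) ≤ p*D/(c*Θ) := by positivity
        have hkey : ∀ x, x₀ ≤ x → v₀ - p*D/(c*Θ) ≤ V x := by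
          intro x hx
          have h := hB2 x hx
          have hexp : 0 < Real.exp (-((Θ/D)*(x - x₀))) := Real.exp_pos _
          nlinarith
        have := ge_of_tendsto hVtop (eventually_atTop.mpr ⟨x₀, hkey⟩)
        linarith
      have h6 : v₀ * (c*Θ) ≤ p*D := by
        rwa [le_div_iff₀ (by positivity)] at hvle
      have h7 : p ≤ (1 - u₀) * Θ := by
        rwa [div_le_iff₀ hΘ] at hPle
      have h8 : p * D ≤ (1 - u₀) * Θ * D :=
        mul_le_mul_of_nonneg_right h7 hD0.le
      nlinarith [mul_pos hu₀pos (sub_pos.mpr hD), hΘ]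





lemma core (D Θ A1 A2 K1 K2 c : ℝ) (hD : 1 ≤ D) (hA1 : 1 ≤ A1) (hA2 : 1 ≤ A2)
    (hK1 : 0 < K1) (hK2 : 0 < K2) (hc : 0 < c)
    (U V : ℝ → ℝ) (hU : ContDiff ℝ 2 U) (hV : ContDiff ℝ 2 V)
    (hU0 : ∀ x, 0 ≤ U x) (hV0 : ∀ x, 0 ≤ V x)
    (hE1 : ∀ x, 0 ≤ deriv (deriv U) x + Θ * deriv U x + K1 * (U x * (1 - U x - A1 * V x)))
    (hE2 : ∀ x, 0 ≤ D * deriv (deriv V) x + Θ * deriv V x + K2 * (V x * (1 - A2 * U x - V x)))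
    (hUbot : Tendsto U atBot (nhds 1)) (hVbot : Tendsto V atBot (nhds 0))
    (hUtop : Tendsto U atTop (nhds 0)) (hVtop : Tendsto V atTop (nhds 1)) :
    ∀ x, U x + c * V x ≤ max 1 c * D := by
  have hD0 : (0:ℝ) < D := by linarith
  -- Step 1 : U ≤ 1
  have hU1 : ∀ x, U x ≤ 1 := by
    by_contra hcon
    push_neg at hcon
    obtain ⟨y, hy⟩ := hcon
    obtain ⟨z, hz⟩ := exists_global_max (cd2_diff hU).continuous hUbot hUtop hy
      (lt_trans zero_lt_one hy)
    have hz1 : 1 < U z := lt_of_lt_of_le hy (hz y)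
    have hd0 : deriv U z = 0 := IsLocalMax.deriv_eq_zero (Filter.Eventually.of_forall hz)
    have hd2 : deriv (deriv U) z ≤ 0 := deriv2_nonpos_at_max hU hz
    have h := hE1 z
    rw [hd0] at h
    have hneg : 1 - U z - A1 * V z < 0 := by nlinarith [hV0 z]
    have hprod : K1 * (U z * (1 - U z - A1 * V z)) < 0 :=
      mul_neg_of_pos_of_neg hK1 (mul_neg_of_pos_of_neg (by linarith) hneg)
    nlinarith
  -- Step 2 : V ≤ 1
  have hV1 : ∀ x, V x ≤ 1 := by
    by_contra hcon
    push_neg at hcon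
    obtain ⟨y, hy⟩ := hcon
    obtain ⟨z, hz⟩ := exists_global_max (cd2_diff hV).continuous hVbot hVtop
      (lt_trans zero_lt_one hy) hy
    have hz1 : 1 < V z := lt_of_lt_of_le hy (hz y)
    have hd0 : deriv V z = 0 := IsLocalMax.deriv_eq_zero (Filter.Eventually.of_forall hz)
    have hd2 : deriv (deriv V) z ≤ 0 := deriv2_nonpos_at_max hV hz
    have h := hE2 z
    rw [hd0] at h
    have hneg : 1 - A2 * U z - V z < 0 := by nlinarith [hU0 z]
    have hprod : K2 * (V z * (1 - A2 * U z - V z)) < 0 :=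
      mul_neg_of_pos_of_neg hK2 (mul_neg_of_pos_of_neg (by linarith) hneg)
    nlinarith [mul_nonpos_of_nonneg_of_nonpos hD0.le hd2]
  -- Step 3 : the main bound
  by_contra hcon
  push_neg at hcon
  obtain ⟨y, hy⟩ := hcon
  set W : ℝ → ℝ := fun x => U x + c * V x with hWdef
  have hWsm : ContDiff ℝ 2 W := hU.add (contDiff_const.mul hV)
  have hWbot : Tendsto W atBot (nhds 1) := by
    have := hUbot.add ((hVbot.const_mul c))
    simpa using this
  have hWtop : Tendsto W atTop (nhds c) := by
    have := hUtop.add ((hVtop.const_mul c))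
    simpa using this
  have hmax1 : (1:ℝ) ≤ max 1 c := le_max_left 1 c
  have hmaxc : c ≤ max 1 c := le_max_right 1 c
  have hmD : max 1 c ≤ max 1 c * D := by nlinarith
  have hy1 : 1 < W y := by simp only [hWdef]; nlinarith
  have hy2 : c < W y := by simp only [hWdef]; nlinarith
  obtain ⟨z, hz⟩ := exists_global_max hWsm.continuous hWbot hWtop hy1 hy2
  have hWz : max 1 c * D < W z := lt_of_lt_of_le hy (hz y)
  have hdW : deriv W = fun x => deriv U x + c * deriv V x := by
    funext x
    rw [hWdef]
    rw [deriv_fun_add (cd2_diff hU x) ((cd2_diff hV x).const_mul c),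
      deriv_const_mul c (cd2_diff hV x)]
  have hd0 : deriv W z = 0 := IsLocalMax.deriv_eq_zero (Filter.Eventually.of_forall hz)
  have hrel : deriv U z + c * deriv V z = 0 := by
    have h := hd0; rw [hdW] at h; simpa using h
  have hd2 : deriv (deriv W) z ≤ 0 := deriv2_nonpos_at_max hWsm hz
  have hdd : deriv (deriv U) z + c * deriv (deriv V) z ≤ 0 := by
    have h1 : deriv (deriv W) z = deriv (deriv U) z + c * deriv (deriv V) z := by
      rw [hdW]
      rw [deriv_fun_add (cd2_diff_deriv hU z) ((cd2_diff_deriv hV z).const_mul c),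
        deriv_const_mul c (cd2_diff_deriv hV z)]
    linarith [hd2, h1.symm.le]
  -- basic facts at the max point
  have hWzval : max 1 c * D < U z + c * V z := by
    have : W z = U z + c * V z := rfl
    linarith [hWz]
  have hu₀pos : 0 < U z := by
    rcases lt_or_ge 0 (U z) with h | h
    · exact h
    · exfalso; nlinarith [hV1 z, hU0 z, hV0 z]
  have hv₀pos : 0 < V z := by
    rcases lt_or_ge 0 (V z) with h | h
    · exact h
    · exfalso; nlinarith [hU1 z, hV0 z]
  have hsum : 1 < U z + V z := by
    rcases le_or_gt c 1 with h | h
    · nlinarith [hV0 z]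
    · nlinarith [hU0 z]
  have hf₀ : U z * (1 - U z - A1 * V z) < 0 :=
    mul_neg_of_pos_of_neg hu₀pos (by nlinarith [hV0 z])
  have hg₀ : V z * (1 - A2 * U z - V z) < 0 :=
    mul_neg_of_pos_of_neg hv₀pos (by nlinarith [hU0 z])
  -- the key sign relation
  have hkey : 0 < Θ * deriv U z * (D - 1) := by
    have t1 : 0 ≤ D * (deriv (deriv U) z + Θ * deriv U z
        + K1 * (U z * (1 - U z - A1 * V z))) := mul_nonneg hD0.le (hE1 z)
    have t2 : 0 ≤ c * (D * deriv (deriv V) z + Θ * deriv V z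
        + K2 * (V z * (1 - A2 * U z - V z))) := mul_nonneg hc.le (hE2 z)
    have t3 : 0 ≤ D * (-(deriv (deriv U) z + c * deriv (deriv V) z)) :=
      mul_nonneg hD0.le (by linarith)
    have t4 : 0 < D * (K1 * (-(U z * (1 - U z - A1 * V z)))) :=
      mul_pos hD0 (mul_pos hK1 (by linarith))
    have t5 : 0 < c * (K2 * (-(V z * (1 - A2 * U z - V z)))) :=
      mul_pos hc (mul_pos hK2 (by linarith))
    have t6 : Θ * (deriv U z + c * deriv V z) = 0 := by rw [hrel]; ring
    nlinarith [t1, t2, t3, t4, t5, t6]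
  have hD1 : 1 < D := by
    rcases lt_or_ge 1 D with h | h
    · exact h
    · exfalso
      have : D = 1 := le_antisymm h hD
      rw [this] at hkey
      simp at hkey
  rcases lt_trichotomy Θ 0 with hΘneg | hΘ0 | hΘpos
  · -- reflect
    have hp : deriv U z < 0 := by
      by_contra h
      push_neg at h
      have h1 : Θ * deriv U z ≤ 0 := mul_nonpos_of_nonpos_of_nonneg hΘneg.le h
      have h2 : Θ * deriv U z * (D - 1) ≤ 0 :=
        mul_nonpos_of_nonpos_of_nonneg h1 (by linarith)
      linarith [hkey]
    have hE1r : ∀ x, 0 ≤ deriv (deriv (fun y => U (-y))) x + (-Θ) * deriv (fun y => U (-y)) x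
        + K1 * ((fun y => U (-y)) x * (1 - (fun y => U (-y)) x - A1 * (fun y => V (-y)) x)) := by
      intro x
      rw [deriv2_comp_neg U hU x, deriv_comp_neg' U (cd2_diff hU) x]
      have h := hE1 (-x)
      simp only []
      nlinarith [h]
    have hE2r : ∀ x, 0 ≤ D * deriv (deriv (fun y => V (-y))) x + (-Θ) * deriv (fun y => V (-y)) x
        + K2 * ((fun y => V (-y)) x * (1 - A2 * (fun y => U (-y)) x - (fun y => V (-y)) x)) := by
      intro x
      rw [deriv2_comp_neg V hV x, deriv_comp_neg' V (cd2_diff hV) x]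
      have h := hE2 (-x)
      simp only []
      nlinarith [h]
    have hlimr : Tendsto (fun y => V (-y)) atTop (nhds 0) := hVbot.comp tendsto_neg_atTop_atBot
    have hqr : max 1 c * D < (fun y => U (-y)) (-z) + c * (fun y => V (-y)) (-z) := by
      simp only [neg_neg]
      exact hWzval
    have hpr : 0 < deriv (fun y => U (-y)) (-z) := by
      rw [deriv_comp_neg' U (cd2_diff hU) (-z), neg_neg]
      linarith
    have hrelr : deriv (fun y => U (-y)) (-z) + c * deriv (fun y => V (-y)) (-z) = 0 := by
      rw [deriv_comp_neg' U (cd2_diff hU) (-z), deriv_comp_neg' V (cd2_diff hV) (-z), neg_neg]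
      linarith [hrel]
    exact oneSided D (-Θ) c A1 A2 K1 K2 hD1 (by linarith) hc hA1 hA2 hK1.le hK2.le
      (fun y => U (-y)) (fun y => V (-y)) (hU.comp contDiff_neg) (hV.comp contDiff_neg)
      (fun x => hU0 (-x)) (fun x => hV0 (-x)) (fun x => hU1 (-x)) (fun x => hV1 (-x))
      hE1r hE2r (Or.inr hlimr) (-z) hqr hpr hrelr
  · rw [hΘ0] at hkey; simp at hkey
  · have hp : 0 < deriv U z := by
      by_contra h
      push_neg at h
      have h1 : Θ * deriv U z ≤ 0 := mul_nonpos_of_nonneg_of_nonpos hΘpos.le h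
      have h2 : Θ * deriv U z * (D - 1) ≤ 0 :=
        mul_nonpos_of_nonpos_of_nonneg h1 (by linarith)
      linarith [hkey]
    exact oneSided D Θ c A1 A2 K1 K2 hD1 hΘpos hc hA1 hA2 hK1.le hK2.le U V hU hV
      hU0 hV0 hU1 hV1 hE1 hE2 (Or.inl hUtop) z hWzval hp hrel




/-- Upper bound for `q(x) = α u(x) + d β v(x)` under the differential
inequalities `≥ 0` for the scaled two-species Lotka-Volterra system. -/
theorem lv_upper_bound_q
    (a1 a2 d k θ α β : ℝ)
    (ha1 : 1 < a1) (ha2 : 1 < a2) (hd : 0 < d) (hk : 0 < k)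
    (hα : 0 < α) (hβ : 0 < β)
    (u v : ℝ → ℝ)
    (hu : ContDiff ℝ 2 u) (hv : ContDiff ℝ 2 v)
    (hu0 : ∀ x, 0 ≤ u x) (hv0 : ∀ x, 0 ≤ v x)
    (hequ : ∀ x, 0 ≤ deriv (deriv u) x + θ * deriv u x
      + u x * (1 - u x - a1 * v x))
    (heqv : ∀ x, 0 ≤ d * deriv (deriv v) x + θ * deriv v x
      + k * v x * (1 - a2 * u x - v x))
    (huM : Tendsto u atBot (nhds 1)) (hvM : Tendsto v atBot (nhds 0))
    (huP : Tendsto u atTop (nhds 0)) (hvP : Tendsto v atTop (nhds 1)) :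
    ∀ x : ℝ,
      α * u x + d * β * v x ≤ max (α / d) β * max 1 (d ^ 2) := by
  intro x
  rcases le_total 1 d with hd1 | hd1
  · -- case d ≥ 1
    have hE1 : ∀ y, 0 ≤ deriv (deriv u) y + θ * deriv u y
        + 1 * (u y * (1 - u y - a1 * v y)) := by
      intro y; have := hequ y; linarith [hequ y]
    have hE2 : ∀ y, 0 ≤ d * deriv (deriv v) y + θ * deriv v y
        + k * (v y * (1 - a2 * u y - v y)) := by
      intro y; have h := heqv y; nlinarith [h]
    have hcore := core d θ a1 a2 1 k (d*β/α) hd1 ha1.le ha2.le one_pos hk (by positivity)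
      u v hu hv hu0 hv0 hE1 hE2 huM hvM huP hvP x
    have hm3 : max 1 (d^2) = d^2 := max_eq_right (by nlinarith)
    rw [hm3]
    rcases le_total α (d*β) with hab | hab
    · have hm1 : max 1 (d*β/α) = d*β/α := max_eq_right (by rw [le_div_iff₀ hα]; linarith)
      have hm2 : max (α/d) β = β := max_eq_right (by rw [div_le_iff₀ hd]; nlinarith)
      rw [hm1] at hcore
      rw [hm2]
      have h5 := mul_le_mul_of_nonneg_left hcore hα.le
      calc α * u x + d * β * v x = α * (u x + d*β/α * v x) := by field_simp
        _ ≤ α * (d*β/α * d) := h5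
        _ = β * d^2 := by field_simp
    · have hm1 : max 1 (d*β/α) = 1 := max_eq_left (by rw [div_le_one hα]; linarith)
      have hm2 : max (α/d) β = α/d := max_eq_left (by rw [le_div_iff₀ hd]; nlinarith)
      rw [hm1, one_mul] at hcore
      rw [hm2]
      have h5 := mul_le_mul_of_nonneg_left hcore hα.le
      calc α * u x + d * β * v x = α * (u x + d*β/α * v x) := by field_simp
        _ ≤ α * d := h5
        _ = α/d * d^2 := by field_simp
  · -- case d ≤ 1 : swap the roles and reflect
    have hD : (1:ℝ) ≤ 1/d := by rw [le_div_iff₀ hd]; linarith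
    have hE1 : ∀ y, 0 ≤ deriv (deriv (fun t => v (-t))) y
        + (-θ/d) * deriv (fun t => v (-t)) y
        + (k/d) * ((fun t => v (-t)) y * (1 - (fun t => v (-t)) y - a2 * (fun t => u (-t)) y)) := by
      intro y
      rw [deriv2_comp_neg v hv y, deriv_comp_neg' v (cd2_diff hv) y]
      have h9 : 0 ≤ (1/d) * (d * deriv (deriv v) (-y) + θ * deriv v (-y)
          + k * v (-y) * (1 - a2 * u (-y) - v (-y))) := mul_nonneg (by positivity) (heqv (-y))
      have heq : deriv (deriv v) (-y) + (-θ/d) * -deriv v (-y)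
          + (k/d) * (v (-y) * (1 - v (-y) - a2 * u (-y)))
          = (1/d) * (d * deriv (deriv v) (-y) + θ * deriv v (-y)
          + k * v (-y) * (1 - a2 * u (-y) - v (-y))) := by field_simp; ring
      simp only []
      rw [heq]; exact h9
    have hE2 : ∀ y, 0 ≤ (1/d) * deriv (deriv (fun t => u (-t))) y
        + (-θ/d) * deriv (fun t => u (-t)) y
        + (1/d) * ((fun t => u (-t)) y * (1 - a1 * (fun t => v (-t)) y - (fun t => u (-t)) y)) := by
      intro y
      rw [deriv2_comp_neg u hu y, deriv_comp_neg' u (cd2_diff hu) y]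
      have h9 : 0 ≤ (1/d) * (deriv (deriv u) (-y) + θ * deriv u (-y)
          + u (-y) * (1 - u (-y) - a1 * v (-y))) := mul_nonneg (by positivity) (hequ (-y))
      have heq : (1/d) * deriv (deriv u) (-y) + (-θ/d) * -deriv u (-y)
          + (1/d) * (u (-y) * (1 - a1 * v (-y) - u (-y)))
          = (1/d) * (deriv (deriv u) (-y) + θ * deriv u (-y)
          + u (-y) * (1 - u (-y) - a1 * v (-y))) := by ring
      simp only []
      rw [heq]; exact h9
    have hL1 : Tendsto (fun t => v (-t)) atBot (nhds 1) := hvP.comp tendsto_neg_atBot_atTop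
    have hL2 : Tendsto (fun t => u (-t)) atBot (nhds 0) := huP.comp tendsto_neg_atBot_atTop
    have hL3 : Tendsto (fun t => v (-t)) atTop (nhds 0) := hvM.comp tendsto_neg_atTop_atBot
    have hL4 : Tendsto (fun t => u (-t)) atTop (nhds 1) := huM.comp tendsto_neg_atTop_atBot
    have hcore := core (1/d) (-θ/d) a2 a1 (k/d) (1/d) (α/(d*β)) hD ha2.le ha1.le
      (by positivity) (by positivity) (by positivity)
      (fun t => v (-t)) (fun t => u (-t)) (hv.comp contDiff_neg) (hu.comp contDiff_neg)
      (fun t => hv0 (-t)) (fun t => hu0 (-t)) hE1 hE2 hL1 hL2 hL3 hL4 (-x)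
    simp only [neg_neg] at hcore
    have hm3 : max 1 (d^2) = 1 := max_eq_left (by nlinarith)
    rw [hm3, mul_one]
    rcases le_total α (d*β) with hab | hab
    · have hm1 : max 1 (α/(d*β)) = 1 := max_eq_left (by rw [div_le_one (by positivity)]; linarith)
      have hm2 : max (α/d) β = β := max_eq_right (by rw [div_le_iff₀ hd]; nlinarith)
      rw [hm1, one_mul] at hcore
      rw [hm2]
      have h5 := mul_le_mul_of_nonneg_left hcore (by positivity : (0:ℝ) ≤ d*β)
      calc α * u x + d * β * v x = (d*β) * (v x + α/(d*β) * u x) := by field_simp; ring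
        _ ≤ (d*β) * (1/d) := h5
        _ = β := by field_simp
    · have hm1 : max 1 (α/(d*β)) = α/(d*β) :=
        max_eq_right (by rw [le_div_iff₀ (by positivity)]; linarith)
      have hm2 : max (α/d) β = α/d := max_eq_left (by rw [le_div_iff₀ hd]; nlinarith)
      rw [hm1] at hcore
      rw [hm2]
      have h5 := mul_le_mul_of_nonneg_left hcore (by positivity : (0:ℝ) ≤ d*β)
      calc α * u x + d * β * v x = (d*β) * (v x + α/(d*β) * u x) := by field_simp; ring
        _ ≤ (d*β) * (α/(d*β) * (1/d)) := h5
        _ = α/d := by field_simp
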